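/- Let L satisfy the standard convex OGD assumptions and consider a two-phase procedure: τ steps of gradient descent on a function L₁ with comparator θ₁* followed by T−τ steps on L₂ with comparator θ₂*, each phase individually satisfying the telescoped regret bound. Then the weighted average loss L̄ = (Σ_{t<T} η_t L_t)/(Σ_{t<T} η_t), where L_t is the loss of the function active at step t, satisfies L̄ ≤ [(Σ_{t<τ} η_t) L₁* + (Σ_{τ≤t<T} η_t) L₂*]/(Σ_{t<T} η_t) + [‖θ̃_0 − θ₁*‖² + ‖θ_τ − θ₂*‖²]/(2 Σ_{t<T} η_t) + G²(Σ_{t<T} η_t²)/(2 Σ_{t<T} η_t). -/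

import Mathlib

open Finset

variable {n : ℕ}

local notation "E" => EuclideanSpace ℝ (Fin n)

/-- First-order condition for convex differentiable functions. -/
lemma grad_first_order {f : E → ℝ} (hconv : ConvexOn ℝ Set.univ f)
    {x g : E} (hg : HasGradientAt f g x) (y : E) :
    f x + inner ℝ g (y - x) ≤ f y := by
  set c : ℝ → E := fun t => x + t • (y - x) with hc_def
  have hc : HasDerivAt c (y - x) 0 := by
    simpa [hc_def] using ((hasDerivAt_id (0 : ℝ)).smul_const (y - x)).const_add x
  have hc0 : c 0 = x := by simp [hc_def]
  have hfd : HasFDerivAt f (InnerProductSpace.toDual ℝ E g) (c 0) := by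
    rw [hc0]; exact hg.hasFDerivAt
  have hderiv : HasDerivAt (f ∘ c) (inner ℝ g (y - x) : ℝ) 0 := by
    simpa using hfd.comp_hasDerivAt 0 hc
  have hslope := hasDerivAt_iff_tendsto_slope.mp hderiv
  have hslope' : Filter.Tendsto (slope (f ∘ c) 0) (nhdsWithin 0 (Set.Ioi 0))
      (nhds (inner ℝ g (y - x) : ℝ)) :=
    hslope.mono_left (nhdsWithin_mono _ (fun t ht => by
      simp only [Set.mem_compl_iff, Set.mem_singleton_iff]
      exact ne_of_gt ht))
  have hle : (inner ℝ g (y - x) : ℝ) ≤ f y - f x := by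
    refine le_of_tendsto hslope' ?_
    filter_upwards [Ioo_mem_nhdsGT_of_mem (Set.left_mem_Ico.mpr one_pos)] with t ht
    have ht0 : 0 < t := ht.1
    have ht1 : t < 1 := ht.2
    have hcv := hconv.2 (Set.mem_univ x) (Set.mem_univ y)
      (by linarith : (0:ℝ) ≤ 1 - t) (le_of_lt ht0) (by ring)
    have hct : c t = (1 - t) • x + t • y := by
      simp [hc_def, smul_sub, sub_smul]
      module
    rw [slope_def_field]
    have : f (c t) ≤ (1 - t) * f x + t * f y := by rw [hct]; simpa using hcv
    have h1 : (f (c t) - f (c 0)) / t ≤ f y - f x := by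
      rw [hc0]
      rw [div_le_iff₀ ht0]
      nlinarith
    simpa [div_eq_inv_mul] using h1
  linarith

/-- One step of online gradient descent. -/
lemma ogd_step {f : E → ℝ} {g : E → E} (hconv : ConvexOn ℝ Set.univ f)
    (hgrad : ∀ θ, HasGradientAt f (g θ) θ)
    {G : ℝ} (hG : ∀ θ, ‖g θ‖ ≤ G)
    {η : ℝ} (hη : 0 < η) (θ θs : E) :
    η * (f θ - f θs) ≤ (‖θ - θs‖ ^ 2 - ‖θ - η • g θ - θs‖ ^ 2) / 2 + η ^ 2 * G ^ 2 / 2 := by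
  have hfo := grad_first_order hconv (hgrad θ) θs
  have hfo' : f θ - f θs ≤ inner ℝ (g θ) (θ - θs) := by
    have : (inner ℝ (g θ) (θs - θ) : ℝ) = - inner ℝ (g θ) (θ - θs) := by
      rw [← inner_neg_right]; congr 1; abel
    linarith [hfo, this ▸ hfo]
  have hsub : θ - η • g θ - θs = (θ - θs) - η • g θ := by abel
  have hns : ‖θ - η • g θ - θs‖ ^ 2
      = ‖θ - θs‖ ^ 2 - 2 * inner ℝ (θ - θs) (η • g θ) + ‖η • g θ‖ ^ 2 := by
    rw [hsub]
    rw [@norm_sub_sq_real]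
  have hinner : (inner ℝ (θ - θs) (η • g θ) : ℝ) = η * inner ℝ (g θ) (θ - θs) := by
    rw [real_inner_smul_right, real_inner_comm]
  have hnorm : ‖η • g θ‖ ^ 2 = η ^ 2 * ‖g θ‖ ^ 2 := by
    rw [norm_smul]; simp [mul_pow, abs_of_pos hη]
  have hgθ : ‖g θ‖ ^ 2 ≤ G ^ 2 := by
    have := hG θ
    nlinarith [norm_nonneg (g θ)]
  rw [hns, hinner, hnorm]
  nlinarith [mul_le_mul_of_nonneg_left hfo' (le_of_lt hη), sq_nonneg η]

/-- Telescoped regret bound for a phase of OGD on `Ico a b`. -/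
lemma phase_bound {f : E → ℝ} {g : E → E} (hconv : ConvexOn ℝ Set.univ f)
    (hgrad : ∀ θ, HasGradientAt f (g θ) θ)
    {G : ℝ} (hG : ∀ θ, ‖g θ‖ ≤ G)
    (η : ℕ → ℝ) (hη : ∀ t, 0 < η t)
    (a : ℕ) (θ : ℕ → E) (θs : E) :
    ∀ b, a ≤ b → (∀ t, a ≤ t → t < b → θ (t + 1) = θ t - η t • g (θ t)) →
    ∑ t ∈ Ico a b, η t * (f (θ t) - f θs) ≤
      (‖θ a - θs‖ ^ 2 - ‖θ b - θs‖ ^ 2) / 2 + G ^ 2 / 2 * ∑ t ∈ Ico a b, (η t) ^ 2 := by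
  intro b hab
  induction b, hab using Nat.le_induction with
  | base => intro _; simp
  | succ b hab ih =>
    intro hstep
    have ih' := ih (fun t h1 h2 => hstep t h1 (Nat.lt_succ_of_lt h2))
    rw [Finset.sum_Ico_succ_top hab, Finset.sum_Ico_succ_top hab]
    have hstepb := hstep b hab (Nat.lt_succ_self b)
    have := ogd_step hconv hgrad hG (hη b) (θ b) θs
    rw [← hstepb] at this
    nlinarith

/-- Combined two-phase OGD bound: `τ` steps of gradient descent on `L₁`
followed by `T − τ` steps on `L₂` (starting from an expanded point `ψ τ`),
bounding the learning-rate-weighted average loss. -/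
theorem two_phase_bound {n : ℕ}
    (L₁ L₂ : EuclideanSpace ℝ (Fin n) → ℝ)
    (g₁ g₂ : EuclideanSpace ℝ (Fin n) → EuclideanSpace ℝ (Fin n))
    (hconv₁ : ConvexOn ℝ Set.univ L₁) (hconv₂ : ConvexOn ℝ Set.univ L₂)
    (hgrad₁ : ∀ θ, HasGradientAt L₁ (g₁ θ) θ)
    (hgrad₂ : ∀ θ, HasGradientAt L₂ (g₂ θ) θ)
    (G : ℝ) (hG₁ : ∀ θ, ‖g₁ θ‖ ≤ G) (hG₂ : ∀ θ, ‖g₂ θ‖ ≤ G)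
    (η : ℕ → ℝ) (hη : ∀ t, 0 < η t)
    (τ T : ℕ) (hτT : τ ≤ T) (hT : 1 ≤ T)
    (φ ψ : ℕ → EuclideanSpace ℝ (Fin n))
    (hφ : ∀ t < τ, φ (t + 1) = φ t - η t • g₁ (φ t))
    (hψ : ∀ t, τ ≤ t → t < T → ψ (t + 1) = ψ t - η t • g₂ (ψ t))
    (θ₁star θ₂star : EuclideanSpace ℝ (Fin n))
    (hmin₁ : ∀ θ, L₁ θ₁star ≤ L₁ θ) (hmin₂ : ∀ θ, L₂ θ₂star ≤ L₂ θ) :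
    (∑ t ∈ range T, η t * (if t < τ then L₁ (φ t) else L₂ (ψ t))) / (∑ t ∈ range T, η t) ≤
      ((∑ t ∈ range τ, η t) * L₁ θ₁star + (∑ t ∈ Ico τ T, η t) * L₂ θ₂star)
          / (∑ t ∈ range T, η t)
        + (‖φ 0 - θ₁star‖ ^ 2 + ‖ψ τ - θ₂star‖ ^ 2) / (2 * ∑ t ∈ range T, η t)
        + G ^ 2 * (∑ t ∈ range T, (η t) ^ 2) / (2 * ∑ t ∈ range T, η t) := by
  have hS : 0 < ∑ t ∈ range T, η t :=
    Finset.sum_pos (fun t _ => hη t) (Finset.nonempty_range_iff.mpr (by omega))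
  have hP1 := phase_bound hconv₁ hgrad₁ hG₁ η hη 0 φ θ₁star τ (Nat.zero_le τ)
    (fun t _ ht => hφ t ht)
  have hP2 := phase_bound hconv₂ hgrad₂ hG₂ η hη τ ψ θ₂star T hτT hψ
  rw [← range_eq_Ico] at hP1
  have hsplit : ∑ t ∈ range T, η t * (if t < τ then L₁ (φ t) else L₂ (ψ t))
      = ∑ t ∈ range τ, η t * L₁ (φ t) + ∑ t ∈ Ico τ T, η t * L₂ (ψ t) := by
    rw [range_eq_Ico, ← Finset.sum_Ico_consecutive _ (Nat.zero_le τ) hτT, ← range_eq_Ico]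
    congr 1
    · exact Finset.sum_congr rfl (fun t ht => by rw [if_pos (mem_range.mp ht)])
    · exact Finset.sum_congr rfl (fun t ht => by rw [if_neg (not_lt.mpr (mem_Ico.mp ht).1)])
  have hsq : ∑ t ∈ range T, (η t) ^ 2
      = ∑ t ∈ range τ, (η t) ^ 2 + ∑ t ∈ Ico τ T, (η t) ^ 2 := by
    rw [range_eq_Ico, ← Finset.sum_Ico_consecutive _ (Nat.zero_le τ) hτT, ← range_eq_Ico]
  have hd1 : ∑ t ∈ range τ, η t * (L₁ (φ t) - L₁ θ₁star)
      = ∑ t ∈ range τ, η t * L₁ (φ t) - (∑ t ∈ range τ, η t) * L₁ θ₁star := by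
    rw [Finset.sum_mul, ← Finset.sum_sub_distrib]; congr 1; ext t; ring
  have hd2 : ∑ t ∈ Ico τ T, η t * (L₂ (ψ t) - L₂ θ₂star)
      = ∑ t ∈ Ico τ T, η t * L₂ (ψ t) - (∑ t ∈ Ico τ T, η t) * L₂ θ₂star := by
    rw [Finset.sum_mul, ← Finset.sum_sub_distrib]; congr 1; ext t; ring
  have key : ∑ t ∈ range T, η t * (if t < τ then L₁ (φ t) else L₂ (ψ t))
      ≤ ((∑ t ∈ range τ, η t) * L₁ θ₁star + (∑ t ∈ Ico τ T, η t) * L₂ θ₂star)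
        + (‖φ 0 - θ₁star‖ ^ 2 + ‖ψ τ - θ₂star‖ ^ 2) / 2
        + G ^ 2 / 2 * ∑ t ∈ range T, (η t) ^ 2 := by
    rw [hsplit, hsq]
    nlinarith [hP1, hP2, hd1, hd2, sq_nonneg ‖φ τ - θ₁star‖, sq_nonneg ‖ψ T - θ₂star‖]
  have hRHS : ((∑ t ∈ range τ, η t) * L₁ θ₁star + (∑ t ∈ Ico τ T, η t) * L₂ θ₂star)
          / (∑ t ∈ range T, η t)
        + (‖φ 0 - θ₁star‖ ^ 2 + ‖ψ τ - θ₂star‖ ^ 2) / (2 * ∑ t ∈ range T, η t)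
        + G ^ 2 * (∑ t ∈ range T, (η t) ^ 2) / (2 * ∑ t ∈ range T, η t)
      = (((∑ t ∈ range τ, η t) * L₁ θ₁star + (∑ t ∈ Ico τ T, η t) * L₂ θ₂star)
        + (‖φ 0 - θ₁star‖ ^ 2 + ‖ψ τ - θ₂star‖ ^ 2) / 2
        + G ^ 2 / 2 * ∑ t ∈ range T, (η t) ^ 2) / (∑ t ∈ range T, η t) := by
    field_simp
  rw [hRHS]
  exact div_le_div_of_nonneg_right key hS.le
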